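/- Let d≥1 and let k be a kernel of the form k(t,z,τ,ζ) = m(t,z,ζ)δ_{τ=0} + r(t,z,τ,ζ) with r ∈ C_b(R^{1+d}×R^{1+d};R^d) and m ∈ C_b(R^{1+d}×R^d;R^d) satisfying the causality condition (r(t,z,τ,ζ)=0 whenever τ∉[0,t]; m(t,z,ζ)=0 for t<0) and, for each T>0, the Lipschitz condition |r(t,z,τ,ζ)−r(t,z′,τ,ζ′)| + |m(t,z,ζ₀)−m(t,z′,ζ₀′)| ≤ Lip_T(k)(min(1,|z−z′|) + min(1,|ζ−ζ′|) + min(1,|ζ₀−ζ₀′|)) for all t,τ ∈ [0,T]. Then for every Borel probability measure ρ^{in} on R^d, the mean-field integro-differential equation Ż(t,z) = Kρ(t,Z(t,z)), where ρ(t,·) = Z(t,·)#ρ^{in} and Z(0,z) = z, has a unique global solution Z ∈ C(R_+×R^d;R^d) such that t ↦ Z(t,z) is continuously differentiable on R_+ for each z ∈ R^d. -/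

import Mathlib

open MeasureTheory Real Set
open scoped ENNReal NNReal Topology

noncomputable section

/-- Euclidean space ℝ^d. -/
abbrev Rd (d : ℕ) : Type := EuclideanSpace ℝ (Fin d)

/-- Solution of the mean-field integro-differential equation
`Ż(t,z) = Kρ(t, Z(t,z))`, `ρ(t,·) = Z(t,·)#ρ^in`, `Z(0,z) = z`, where the operator `K`
is associated with the kernel `k(t,z,τ,ζ) = m(t,z,ζ)δ_{τ=0} + r(t,z,τ,ζ)`:
`Kμ(t,z) = ∫∫ r(t,z,τ,ζ) μ(τ,dζ) dτ + ∫ m(t,z,ζ) μ(0,dζ)`. -/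
def IsMFSol {d : ℕ} (r : (ℝ × Rd d) → (ℝ × Rd d) → Rd d)
    (m : (ℝ × Rd d) → Rd d → Rd d) (ρin : Measure (Rd d))
    (Z : ℝ → Rd d → Rd d) : Prop :=
  (Continuous fun p : ℝ × Rd d => Z p.1 p.2) ∧
  (∀ z, Z 0 z = z) ∧
  (∀ z : Rd d, ∀ t : ℝ, 0 ≤ t →
    HasDerivAt (fun s => Z s z)
      ((∫ τ in (0:ℝ)..t, ∫ ζ, r (t, Z t z) (τ, Z τ ζ) ∂ρin)
        + ∫ ζ, m (t, Z t z) (Z 0 ζ) ∂ρin) t)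

namespace MFAux

variable {d : ℕ} (r : (ℝ × Rd d) → (ℝ × Rd d) → Rd d)
  (m : (ℝ × Rd d) → Rd d → Rd d)
  (ρin : Measure (Rd d)) [IsProbabilityMeasure ρin]

/-- clamp to `[0, N]` -/
def pic (N t : ℝ) : ℝ := max 0 (min t N)

lemma pic_nonneg (N t : ℝ) : 0 ≤ pic N t := le_max_left _ _

lemma pic_le {N : ℝ} (hN : 0 ≤ N) (t : ℝ) : pic N t ≤ N :=
  max_le hN (min_le_right _ _)

lemma pic_eq {N t : ℝ} (h0 : 0 ≤ t) (hN : t ≤ N) : pic N t = t := by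
  simp [pic, min_eq_left hN, max_eq_right h0]

lemma pic_of_nonpos {N t : ℝ} (hN : 0 ≤ N) (ht : t ≤ 0) : pic N t = 0 := by
  simp [pic, min_eq_left (ht.trans hN), max_eq_left ht]

lemma continuous_pic (N : ℝ) : Continuous (pic N) :=
  continuous_const.max ((continuous_id.min continuous_const))

lemma pic_mem_Icc {N : ℝ} (hN : 0 ≤ N) (t : ℝ) : pic N t ∈ Icc (0:ℝ) N :=
  ⟨pic_nonneg N t, pic_le hN t⟩

/-- The space of bounded continuous flows. -/
abbrev EE (d : ℕ) : Type := BoundedContinuousFunction (ℝ × Rd d) (Rd d)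

/-- The integrand operator. -/
def Aop (N : ℝ) (Y : ℝ × Rd d → Rd d) (s : ℝ) (z : Rd d) : Rd d :=
  (∫ τ in (0:ℝ)..(pic N s), ∫ ζ, r (s, z + Y (s, z)) (τ, ζ + Y (τ, ζ)) ∂ρin)
    + ∫ ζ, m (s, z + Y (s, z)) ζ ∂ρin

section lemmas

variable {X : Type*} [TopologicalSpace X] [FirstCountableTopology X]

lemma integral_cont {F : X → Rd d → Rd d} (hF : Continuous fun p : X × Rd d => F p.1 p.2)
    {C : ℝ} (hC : ∀ x ζ, ‖F x ζ‖ ≤ C) :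
    Continuous fun x => ∫ ζ, F x ζ ∂ρin := by
  refine continuous_of_dominated (fun x => ?_) (fun x => .of_forall (hC x))
    (integrable_const C) (.of_forall fun ζ => ?_)
  · exact (hF.comp (continuous_const.prodMk continuous_id)).aestronglyMeasurable
  · exact hF.comp (continuous_id.prodMk continuous_const)

lemma integral_norm_le {f : Rd d → Rd d} {C : ℝ} (hf : ∀ ζ, ‖f ζ‖ ≤ C) :
    ‖∫ ζ, f ζ ∂ρin‖ ≤ C := by
  have h := norm_integral_le_of_norm_le_const (μ := ρin) (f := f) (C := C) (.of_forall hf)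
  simpa using h

lemma integrable_of_bounded {f : Rd d → Rd d} (hfc : Continuous f) {C : ℝ}
    (hf : ∀ ζ, ‖f ζ‖ ≤ C) : Integrable f ρin :=
  (integrable_const C).mono' hfc.aestronglyMeasurable (.of_forall hf)

end lemmas

section AopProps

variable (hrc : Continuous fun q : (ℝ × Rd d) × (ℝ × Rd d) => r q.1 q.2)
  (hmc : Continuous fun q : (ℝ × Rd d) × Rd d => m q.1 q.2)
  {Cr Cm : ℝ} (hCr : ∀ p q, ‖r p q‖ ≤ Cr) (hCm : ∀ p ζ, ‖m p ζ‖ ≤ Cm)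

include hrc hmc hCr hCm in
lemma Aop_cont (N : ℝ) {Y : ℝ × Rd d → Rd d} (hY : Continuous Y) :
    Continuous fun p : ℝ × Rd d => Aop r m ρin N Y p.1 p.2 := by
  unfold Aop
  apply Continuous.add
  · apply intervalIntegral.continuous_parametric_intervalIntegral_of_continuous (μ := volume)
      (f := fun (p : ℝ × Rd d) (τ : ℝ) =>
        ∫ ζ, r (p.1, p.2 + Y p) (τ, ζ + Y (τ, ζ)) ∂ρin)
      ?_ ((continuous_pic N).comp continuous_fst)
    apply integral_cont ρin
      (F := fun (q : (ℝ × Rd d) × ℝ) ζ => r (q.1.1, q.1.2 + Y q.1) (q.2, ζ + Y (q.2, ζ)))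
      ?_ (fun q ζ => hCr _ _)
    fun_prop
  · apply integral_cont ρin (F := fun (p : ℝ × Rd d) ζ => m (p.1, p.2 + Y p) ζ)
      ?_ (fun p ζ => hCm _ _)
    fun_prop

include hCr in
lemma Cr_nonneg : 0 ≤ Cr := le_trans (norm_nonneg _) (hCr (0, 0) (0, 0))

include hCm in
lemma Cm_nonneg : 0 ≤ Cm := le_trans (norm_nonneg _) (hCm (0, 0) 0)

include hCr hCm in
lemma Aop_norm_le {N : ℝ} (hN : 0 ≤ N) (Y : ℝ × Rd d → Rd d) (s : ℝ) (z : Rd d) :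
    ‖Aop r m ρin N Y s z‖ ≤ Cr * N + Cm := by
  refine (norm_add_le _ _).trans (add_le_add ?_ (integral_norm_le ρin fun ζ => hCm _ _))
  calc ‖∫ τ in (0:ℝ)..(pic N s), ∫ ζ, r (s, z + Y (s, z)) (τ, ζ + Y (τ, ζ)) ∂ρin‖
      ≤ Cr * |pic N s - 0| :=
        intervalIntegral.norm_integral_le_of_norm_le_const
          (fun τ _ => integral_norm_le ρin fun ζ => hCr _ _)
    _ ≤ Cr * N := by
        rw [sub_zero, abs_of_nonneg (pic_nonneg N s)]
        exact mul_le_mul_of_nonneg_left (pic_le hN s) (Cr_nonneg r hCr)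


set_option maxHeartbeats 2000000 in
include hrc hmc hCr hCm in
/-- Existence and uniqueness of the fixed point of the Picard operator on `[0,N]`. -/
lemma exists_unique_fix (N : ℝ) (hN : 0 < N) (L : ℝ) (hL0 : 0 ≤ L)
    (hLip : ∀ t ∈ Icc (0:ℝ) N, ∀ τ ∈ Icc (0:ℝ) N, ∀ z z' ζ ζ' ζ₀ ζ₀' : Rd d,
      ‖r (t, z) (τ, ζ) - r (t, z') (τ, ζ')‖ + ‖m (t, z) ζ₀ - m (t, z') ζ₀'‖
        ≤ L * (min 1 ‖z - z'‖ + min 1 ‖ζ - ζ'‖ + min 1 ‖ζ₀ - ζ₀'‖)) :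
    ∃! Y : BoundedContinuousFunction (ℝ × Rd d) (Rd d),
      ∀ p : ℝ × Rd d, Y p = ∫ s in (0:ℝ)..(pic N p.1), Aop r m ρin N (⇑Y) s p.2 := by
  classical
  have hCr0 : 0 ≤ Cr := Cr_nonneg r hCr
  have hCm0 : 0 ≤ Cm := Cm_nonneg m hCm
  haveI : Nonempty (EE d) := ⟨0⟩
  have hcontA : ∀ Y : EE d, Continuous fun p : ℝ × Rd d => Aop r m ρin N (⇑Y) p.1 p.2 :=
    fun Y => Aop_cont r m ρin hrc hmc hCr hCm N Y.continuous
  have hAcont1 : ∀ (Y : EE d) (z : Rd d), Continuous fun s => Aop r m ρin N (⇑Y) s z := by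
    intro Y z
    have h := hcontA Y
    fun_prop
  have hPc : ∀ Y : EE d,
      Continuous fun p : ℝ × Rd d => ∫ s in (0:ℝ)..(pic N p.1), Aop r m ρin N (⇑Y) s p.2 := by
    intro Y
    have h := hcontA Y
    apply intervalIntegral.continuous_parametric_intervalIntegral_of_continuous (μ := volume)
      (f := fun (p : ℝ × Rd d) (s : ℝ) => Aop r m ρin N (⇑Y) s p.2)
      ?_ ((continuous_pic N).comp continuous_fst)
    fun_prop
  have hPb : ∀ Y : EE d, ∀ p : ℝ × Rd d,
      ‖∫ s in (0:ℝ)..(pic N p.1), Aop r m ρin N (⇑Y) s p.2‖ ≤ (Cr * N + Cm) * N := by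
    intro Y p
    calc ‖∫ s in (0:ℝ)..(pic N p.1), Aop r m ρin N (⇑Y) s p.2‖
        ≤ (Cr * N + Cm) * |MFAux.pic N p.1 - 0| :=
          intervalIntegral.norm_integral_le_of_norm_le_const
            (fun s _ => Aop_norm_le r m ρin hCr hCm hN.le (⇑Y) s p.2)
      _ ≤ (Cr * N + Cm) * N := by
          rw [sub_zero, abs_of_nonneg (pic_nonneg N p.1)]
          have h0 : 0 ≤ Cr * N + Cm := by positivity
          exact mul_le_mul_of_nonneg_left (pic_le hN.le p.1) h0
  set P : EE d → EE d := fun Y =>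
    BoundedContinuousFunction.ofNormedAddCommGroup _ (hPc Y) _ (hPb Y) with hP
  have hPapp : ∀ (Y : EE d) (p : ℝ × Rd d),
      P Y p = ∫ s in (0:ℝ)..(pic N p.1), Aop r m ρin N (⇑Y) s p.2 := fun _ _ => rfl
  set c := L * (2 * N + 1) with hc
  clear_value c
  have hc0 : 0 ≤ c := by rw [hc]; exact mul_nonneg hL0 (by linarith)
  -- key pointwise Lipschitz bound for `Aop`
  have hDelta : ∀ (Y₁ Y₂ : EE d) (s : ℝ), 0 ≤ s → s ≤ N → ∀ (z : Rd d) (B : ℝ), 0 ≤ B →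
      (∀ q : ℝ × Rd d, q.1 ∈ Icc (0:ℝ) s → ‖Y₁ q - Y₂ q‖ ≤ B) →
      ‖Aop r m ρin N (⇑Y₁) s z - Aop r m ρin N (⇑Y₂) s z‖ ≤ c * B := by
    intro Y₁ Y₂ s hs0 hsN z B hB0 hq
    have hps : pic N s = s := pic_eq hs0 hsN
    have hrint : ∀ (Y : EE d) (τ : ℝ),
        Integrable (fun ζ => r (s, z + Y (s, z)) (τ, ζ + Y (τ, ζ))) ρin := by
      intro Y τ
      refine integrable_of_bounded ρin ?_ (fun ζ => hCr _ _)
      have hYc := Y.continuous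
      fun_prop
    have hIcont : ∀ Y : EE d,
        Continuous fun τ => ∫ ζ, r (s, z + Y (s, z)) (τ, ζ + Y (τ, ζ)) ∂ρin := by
      intro Y
      refine integral_cont ρin
        (F := fun (τ : ℝ) ζ => r (s, z + Y (s, z)) (τ, ζ + Y (τ, ζ))) ?_ (fun τ ζ => hCr _ _)
      have hYc := Y.continuous
      fun_prop
    have hmint : ∀ (Y : EE d), Integrable (fun ζ => m (s, z + Y (s, z)) ζ) ρin := by
      intro Y
      refine integrable_of_bounded ρin ?_ (fun ζ => hCm _ _)
      fun_prop
    unfold Aop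
    rw [hps, add_sub_add_comm]
    refine (norm_add_le _ _).trans ?_
    have hmem : ∀ q : ℝ × Rd d, q.1 = s → ‖Y₁ q - Y₂ q‖ ≤ B := fun q h =>
      hq q (by rw [h]; exact ⟨hs0, le_rfl⟩)
    -- r-part
    have hr1 : ‖(∫ τ in (0:ℝ)..s, ∫ ζ, r (s, z + Y₁ (s, z)) (τ, ζ + Y₁ (τ, ζ)) ∂ρin) -
        ∫ τ in (0:ℝ)..s, ∫ ζ, r (s, z + Y₂ (s, z)) (τ, ζ + Y₂ (τ, ζ)) ∂ρin‖
        ≤ (L * (B + B + 0)) * N := by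
      rw [← intervalIntegral.integral_sub ((hIcont Y₁).intervalIntegrable _ _)
        ((hIcont Y₂).intervalIntegrable _ _)]
      calc ‖∫ τ in (0:ℝ)..s, ((∫ ζ, r (s, z + Y₁ (s, z)) (τ, ζ + Y₁ (τ, ζ)) ∂ρin) -
            ∫ ζ, r (s, z + Y₂ (s, z)) (τ, ζ + Y₂ (τ, ζ)) ∂ρin)‖
          ≤ (L * (B + B + 0)) * |s - 0| := by
            refine intervalIntegral.norm_integral_le_of_norm_le_const ?_
            intro τ hτ
            rw [uIoc_of_le hs0] at hτ
            rw [← integral_sub (hrint Y₁ τ) (hrint Y₂ τ)]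
            refine integral_norm_le ρin ?_
            intro ζ
            have hlip := hLip s ⟨hs0, hsN⟩ τ ⟨hτ.1.le, hτ.2.trans hsN⟩
              (z + Y₁ (s, z)) (z + Y₂ (s, z)) (ζ + Y₁ (τ, ζ)) (ζ + Y₂ (τ, ζ)) 0 0
            have h1 : ‖r (s, z + Y₁ (s, z)) (τ, ζ + Y₁ (τ, ζ)) -
                r (s, z + Y₂ (s, z)) (τ, ζ + Y₂ (τ, ζ))‖
                ≤ L * (min 1 ‖(z + Y₁ (s, z)) - (z + Y₂ (s, z))‖ +
                    min 1 ‖(ζ + Y₁ (τ, ζ)) - (ζ + Y₂ (τ, ζ))‖ + min 1 ‖(0:Rd d) - 0‖) :=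
              le_trans (le_add_of_nonneg_right (norm_nonneg _)) hlip
            rw [add_sub_add_left_eq_sub, add_sub_add_left_eq_sub] at h1
            refine h1.trans ?_
            have e0 : ‖(0:Rd d) - 0‖ = 0 := by simp
            rw [e0, min_eq_right zero_le_one]
            gcongr
            · exact (min_le_right _ _).trans (hmem (s, z) rfl)
            · exact (min_le_right _ _).trans (hq (τ, ζ) ⟨hτ.1.le, hτ.2⟩)
        _ ≤ (L * (B + B + 0)) * N := by
            rw [sub_zero, abs_of_nonneg hs0]
            have h0 : 0 ≤ L * (B + B + 0) := by positivity
            exact mul_le_mul_of_nonneg_left hsN h0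
    -- m-part
    have hm1 : ‖(∫ ζ, m (s, z + Y₁ (s, z)) ζ ∂ρin) - ∫ ζ, m (s, z + Y₂ (s, z)) ζ ∂ρin‖
        ≤ L * (B + 0 + 0) := by
      rw [← integral_sub (hmint Y₁) (hmint Y₂)]
      refine integral_norm_le ρin ?_
      intro ζ
      have hlip := hLip s ⟨hs0, hsN⟩ 0 ⟨le_rfl, hN.le⟩
        (z + Y₁ (s, z)) (z + Y₂ (s, z)) 0 0 ζ ζ
      have h1 : ‖m (s, z + Y₁ (s, z)) ζ - m (s, z + Y₂ (s, z)) ζ‖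
          ≤ L * (min 1 ‖(z + Y₁ (s, z)) - (z + Y₂ (s, z))‖ + min 1 ‖(0:Rd d) - 0‖ +
            min 1 ‖ζ - ζ‖) :=
        le_trans (le_add_of_nonneg_left (norm_nonneg _)) hlip
      rw [add_sub_add_left_eq_sub] at h1
      refine h1.trans ?_
      have e0 : ‖(0:Rd d) - 0‖ = 0 := by simp
      have e1 : ‖ζ - ζ‖ = 0 := by simp
      rw [e0, e1, min_eq_right zero_le_one]
      gcongr
      exact (min_le_right _ _).trans (hmem (s, z) rfl)
    refine le_trans (add_le_add hr1 hm1) (le_of_eq ?_)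
    rw [hc]; ring
  -- iterated Picard estimate
  have key : ∀ n : ℕ, ∀ Y₁ Y₂ : EE d, ∀ p : ℝ × Rd d,
      ‖(P^[n] Y₁) p - (P^[n] Y₂) p‖
        ≤ dist Y₁ Y₂ * ((c * pic N p.1) ^ n / n.factorial) := by
    intro n
    induction n with
    | zero =>
      intro Y₁ Y₂ p
      simp only [Function.iterate_zero, id_eq, pow_zero, Nat.factorial_zero, Nat.cast_one,
        div_one, mul_one]
      rw [← dist_eq_norm]
      exact BoundedContinuousFunction.dist_coe_le_dist p
    | succ n ih =>
      intro Y₁ Y₂ p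
      obtain ⟨t, z⟩ := p
      rw [Function.iterate_succ_apply', Function.iterate_succ_apply']
      set W₁ := P^[n] Y₁ with hW₁
      set W₂ := P^[n] Y₂ with hW₂
      set D := dist Y₁ Y₂ with hD
      have hD0 : 0 ≤ D := dist_nonneg
      rw [hPapp, hPapp]
      have hint : ∀ W : EE d, IntervalIntegrable (fun s => Aop r m ρin N (⇑W) s z)
          volume 0 (pic N t) := fun W => (hAcont1 W z).intervalIntegrable _ _
      rw [← intervalIntegral.integral_sub (hint W₁) (hint W₂)]
      have hb : ∀ s ∈ Set.uIoc (0:ℝ) (pic N t),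
          ‖Aop r m ρin N (⇑W₁) s z - Aop r m ρin N (⇑W₂) s z‖
            ≤ c * (D * ((c * s) ^ n / n.factorial)) := by
        intro s hs
        rw [uIoc_of_le (pic_nonneg N t)] at hs
        have hs0 : 0 ≤ s := hs.1.le
        have hsN : s ≤ N := hs.2.trans (pic_le hN.le t)
        refine hDelta W₁ W₂ s hs0 hsN z _ ?_ ?_
        · have : (0:ℝ) ≤ (c * s) ^ n / n.factorial := by positivity
          exact mul_nonneg hD0 this
        · intro q hq
          refine (ih Y₁ Y₂ q).trans ?_
          rw [pic_eq hq.1 (hq.2.trans hsN)]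
          have hcq : c * q.1 ≤ c * s := mul_le_mul_of_nonneg_left hq.2 hc0
          have hcq0 : 0 ≤ c * q.1 := mul_nonneg hc0 hq.1
          gcongr
      have hgcont : Continuous fun s : ℝ => c * (D * ((c * s) ^ n / n.factorial)) := by
        fun_prop
      calc ‖∫ s in (0:ℝ)..(pic N t),
            (Aop r m ρin N (⇑W₁) s z - Aop r m ρin N (⇑W₂) s z)‖
          ≤ |∫ s in (0:ℝ)..(pic N t), c * (D * ((c * s) ^ n / n.factorial))| := by
            refine intervalIntegral.norm_integral_le_abs_of_norm_le ?_
              (hgcont.intervalIntegrable _ _)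
            exact (ae_restrict_iff' measurableSet_uIoc).2 (Filter.Eventually.of_forall hb)
        _ = D * ((c * pic N t) ^ (n + 1) / (n + 1).factorial) := by
            have hrw : ∀ s : ℝ, c * (D * ((c * s) ^ n / n.factorial))
                = (c ^ (n + 1) * D / n.factorial) * s ^ n := by
              intro s; rw [mul_pow]; ring
            simp only [hrw]
            rw [intervalIntegral.integral_const_mul, integral_pow]
            have ha0 : (0:ℝ) ≤ pic N t := pic_nonneg N t
            have hfac : ((n.factorial : ℝ)) ≠ 0 := by
              exact_mod_cast n.factorial_ne_zero
            have hval : c ^ (n + 1) * D / n.factorial *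
                ((pic N t ^ (n + 1) - 0 ^ (n + 1)) / (n + 1))
                = D * ((c * pic N t) ^ (n + 1) / (n + 1).factorial) := by
              rw [zero_pow (Nat.succ_ne_zero n), mul_pow, Nat.factorial_succ]
              push_cast
              field_simp
              ring
            rw [hval, abs_of_nonneg]
            have h1 : (0:ℝ) ≤ (c * pic N t) ^ (n + 1) := by positivity
            have h2 : (0:ℝ) ≤ ((n + 1).factorial : ℝ) := by positivity
            exact mul_nonneg hD0 (div_nonneg h1 h2)
  -- contraction of an iterate
  obtain ⟨n, hn⟩ : ∃ n : ℕ, (c * N) ^ n / n.factorial < 1 := by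
    have hten := FloorSemiring.tendsto_pow_div_factorial_atTop (K := ℝ) (c * N)
    exact (hten.eventually (gt_mem_nhds one_pos)).exists
  have hq0 : (0:ℝ) ≤ (c * N) ^ n / n.factorial := by positivity
  set K : ℝ≥0 := Real.toNNReal ((c * N) ^ n / n.factorial) with hK
  have hK1 : K < 1 := Real.toNNReal_lt_one.2 hn
  have hKcoe : (K : ℝ) = (c * N) ^ n / n.factorial := Real.coe_toNNReal _ hq0
  have hKd : ∀ Y₁ Y₂ : EE d, dist (P^[n] Y₁) (P^[n] Y₂) ≤ K * dist Y₁ Y₂ := by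
    intro Y₁ Y₂
    have hKD0 : (0:ℝ) ≤ K * dist Y₁ Y₂ := mul_nonneg (by positivity) dist_nonneg
    rw [BoundedContinuousFunction.dist_le hKD0]
    intro p
    rw [dist_eq_norm]
    refine (key n Y₁ Y₂ p).trans ?_
    rw [hKcoe, mul_comm ((c * N) ^ n / n.factorial) (dist Y₁ Y₂)]
    have h1 : c * pic N p.1 ≤ c * N := mul_le_mul_of_nonneg_left (pic_le hN.le p.1) hc0
    have h2 : (0:ℝ) ≤ c * pic N p.1 := mul_nonneg hc0 (pic_nonneg N p.1)
    gcongr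
  have hcontr : ContractingWith K (P^[n]) := ⟨hK1, LipschitzWith.of_dist_le_mul hKd⟩
  set Yfix : EE d := ContractingWith.fixedPoint (P^[n]) hcontr with hYfix
  have hfixn : P^[n] Yfix = Yfix := hcontr.fixedPoint_isFixedPt
  have hPfix : P Yfix = Yfix := by
    have h1 : (P^[n]) (P Yfix) = P Yfix := by
      rw [← Function.iterate_succ_apply, Function.iterate_succ_apply', hfixn]
    exact hcontr.fixedPoint_unique h1
  refine ⟨Yfix, ?_, ?_⟩
  · intro p
    conv_lhs => rw [← hPfix]
    exact hPapp Yfix p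
  · intro Y' hY'
    have hfp : P Y' = Y' := by
      ext p
      rw [hPapp Y' p, ← hY' p]
    exact hcontr.fixedPoint_unique ((show Function.IsFixedPt P Y' from hfp).iterate n)


include hrc hmc hCr hCm in
/-- Family of fixed points on `[0, k+1]`, with consistency and uniqueness. -/
lemma exists_sol_family
    (hlip : ∀ T : ℝ, 0 < T → ∃ L : ℝ, 0 ≤ L ∧
      ∀ t ∈ Icc (0:ℝ) T, ∀ τ ∈ Icc (0:ℝ) T, ∀ z z' ζ ζ' ζ₀ ζ₀' : Rd d,
        ‖r (t, z) (τ, ζ) - r (t, z') (τ, ζ')‖ + ‖m (t, z) ζ₀ - m (t, z') ζ₀'‖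
          ≤ L * (min 1 ‖z - z'‖ + min 1 ‖ζ - ζ'‖ + min 1 ‖ζ₀ - ζ₀'‖)) :
    ∃ Ysol : ℕ → (ℝ × Rd d → Rd d),
      (∀ k, Continuous (Ysol k)) ∧
      (∀ (k : ℕ) (p : ℝ × Rd d), Ysol k p
          = ∫ s in (0:ℝ)..(pic ((k:ℝ)+1) p.1), Aop r m ρin ((k:ℝ)+1) (Ysol k) s p.2) ∧
      (∀ (k l : ℕ) (p : ℝ × Rd d), p.1 ≤ (k:ℝ)+1 → p.1 ≤ (l:ℝ)+1 → Ysol k p = Ysol l p) ∧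
      (∀ (k : ℕ) (Y' : ℝ × Rd d → Rd d), Continuous Y' → (∃ C, ∀ p, ‖Y' p‖ ≤ C) →
        (∀ p : ℝ × Rd d, Y' p
            = ∫ s in (0:ℝ)..(pic ((k:ℝ)+1) p.1), Aop r m ρin ((k:ℝ)+1) Y' s p.2) →
        ∀ p, Y' p = Ysol k p) := by
  classical
  have hex : ∀ k : ℕ, ∃! Y : EE d, ∀ p : ℝ × Rd d,
      Y p = ∫ s in (0:ℝ)..(pic ((k:ℝ)+1) p.1), Aop r m ρin ((k:ℝ)+1) (⇑Y) s p.2 := by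
    intro k
    obtain ⟨L, hL0, hLipN⟩ := hlip ((k:ℝ)+1) (by positivity)
    exact exists_unique_fix r m ρin hrc hmc hCr hCm ((k:ℝ)+1) (by positivity) L hL0 hLipN
  choose Yb h using hex
  -- zero for nonpositive times
  have hzero : ∀ (j : ℕ) (q : ℝ × Rd d), q.1 ≤ 0 → Yb j q = 0 := by
    intro j q hq
    rw [(h j).1 q, pic_of_nonpos (by positivity) hq, intervalIntegral.integral_same]
  -- consistency, directional
  have hdir : ∀ k l : ℕ, k ≤ l → ∀ p : ℝ × Rd d, p.1 ≤ (k:ℝ)+1 → Yb k p = Yb l p := by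
    intro k l hkl p hp1
    have hN0 : (0:ℝ) < (k:ℝ)+1 := by positivity
    have hNM : ((k:ℝ)+1) ≤ ((l:ℝ)+1) := by exact_mod_cast add_le_add_left (Nat.cast_le.2 hkl) 1
    set N : ℝ := (k:ℝ)+1 with hNdef
    set M : ℝ := (l:ℝ)+1 with hMdef
    set W : EE d := (Yb l).compContinuous
      ⟨fun q : ℝ × Rd d => (pic N q.1, q.2), by
        exact ((continuous_pic N).comp continuous_fst).prodMk continuous_snd⟩ with hW
    have hWapp : ∀ q : ℝ × Rd d, W q = Yb l (pic N q.1, q.2) := fun _ => rfl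
    have e5 : ∀ u : ℝ, 0 ≤ u → u ≤ N → ∀ ζ : Rd d, W (u, ζ) = Yb l (u, ζ) := by
      intro u h0 hu ζ
      rw [hWapp, pic_eq h0 hu]
    have hWfix : ∀ q : ℝ × Rd d, W q = ∫ s in (0:ℝ)..(pic N q.1), Aop r m ρin N (⇑W) s q.2 := by
      intro q
      rw [hWapp, (h l).1 (pic N q.1, q.2)]
      have e2 : pic M (pic N q.1) = pic N q.1 :=
        pic_eq (pic_nonneg _ _) ((pic_le hN0.le _).trans hNM)
      rw [e2]
      refine intervalIntegral.integral_congr ?_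
      intro s hs
      rw [uIcc_of_le (pic_nonneg N q.1)] at hs
      have hs0 : 0 ≤ s := hs.1
      have hsN : s ≤ N := hs.2.trans (pic_le hN0.le _)
      show Aop r m ρin M (⇑(Yb l)) s q.2 = Aop r m ρin N (⇑W) s q.2
      unfold Aop
      rw [pic_eq hs0 (hsN.trans hNM), pic_eq hs0 hsN, e5 s hs0 hsN q.2]
      congr 1
      refine intervalIntegral.integral_congr ?_
      intro τ hτ
      rw [uIcc_of_le hs0] at hτ
      simp only [e5 τ hτ.1 (hτ.2.trans hsN)]
    have hWk : W = Yb k := (h k).2 W hWfix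
    rcases le_or_gt 0 p.1 with h0 | h0
    · have : Yb k p = W p := by rw [hWk]
      rw [this, hWapp, pic_eq h0 hp1]
    · rw [hzero k p h0.le, hzero l p h0.le]
  refine ⟨fun k => ⇑(Yb k), fun k => (Yb k).continuous, fun k => (h k).1, ?_, ?_⟩
  · intro k l p hk hl
    rcases le_total k l with hkl | hkl
    · exact hdir k l hkl p hk
    · exact (hdir l k hkl p hl).symm
  · intro k Y' hY'c hY'b hY'fix
    obtain ⟨C, hC⟩ := hY'b
    set Y'b : EE d := BoundedContinuousFunction.ofNormedAddCommGroup Y' hY'c C hC with hY'bdef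
    have : Y'b = Yb k := (h k).2 Y'b hY'fix
    intro p
    show Y'b p = Yb k p
    rw [this]


end AopProps

end MFAux

/-- Existence and uniqueness of the global solution of the mean-field
integro-differential equation for a bounded continuous kernel satisfying the causality
and Lipschitz conditions, for any initial Borel probability measure. -/
theorem mean_field_equation_wellposed
    (d : ℕ) (hd : 1 ≤ d)
    (r : (ℝ × Rd d) → (ℝ × Rd d) → Rd d) (m : (ℝ × Rd d) → Rd d → Rd d)
    (hrc : Continuous fun q : (ℝ × Rd d) × (ℝ × Rd d) => r q.1 q.2)
    (hrb : ∃ C, ∀ p q, ‖r p q‖ ≤ C)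
    (hmc : Continuous fun q : (ℝ × Rd d) × Rd d => m q.1 q.2)
    (hmb : ∃ C, ∀ p ζ, ‖m p ζ‖ ≤ C)
    (hrcaus : ∀ t τ : ℝ, ∀ z ζ : Rd d, τ ∉ Icc 0 t → r (t, z) (τ, ζ) = 0)
    (hmcaus : ∀ t : ℝ, ∀ z ζ : Rd d, t < 0 → m (t, z) ζ = 0)
    (hlip : ∀ T : ℝ, 0 < T → ∃ L : ℝ, 0 ≤ L ∧
      ∀ t ∈ Icc (0:ℝ) T, ∀ τ ∈ Icc (0:ℝ) T, ∀ z z' ζ ζ' ζ₀ ζ₀' : Rd d,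
        ‖r (t, z) (τ, ζ) - r (t, z') (τ, ζ')‖ + ‖m (t, z) ζ₀ - m (t, z') ζ₀'‖
          ≤ L * (min 1 ‖z - z'‖ + min 1 ‖ζ - ζ'‖ + min 1 ‖ζ₀ - ζ₀'‖))
    (ρin : Measure (Rd d)) [IsProbabilityMeasure ρin] :
    ∃ Z : ℝ → Rd d → Rd d, IsMFSol r m ρin Z ∧
      ∀ Z' : ℝ → Rd d → Rd d, IsMFSol r m ρin Z' →
        ∀ t : ℝ, 0 ≤ t → ∀ z, Z' t z = Z t z := by
  classical
  obtain ⟨Cr, hCr⟩ := hrb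
  obtain ⟨Cm, hCm⟩ := hmb
  obtain ⟨Ysol, hYc, hYfix, hYagree, hYuniq⟩ :=
    MFAux.exists_sol_family r m ρin hrc hmc hCr hCm hlip
  have hCr0 : 0 ≤ Cr := MFAux.Cr_nonneg r hCr
  have hCm0 : 0 ≤ Cm := MFAux.Cm_nonneg m hCm
  -- the boundary vector field
  set Mz : Rd d → Rd d := fun z => ∫ ζ, m (0, z) ζ ∂ρin with hMzdef
  have hMzc : Continuous Mz :=
    MFAux.integral_cont ρin (F := fun (z : Rd d) ζ => m ((0:ℝ), z) ζ)
      (by fun_prop) (fun z ζ => hCm _ _)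
  -- the glued solution
  set Z : ℝ → Rd d → Rd d :=
    fun t z => z + (min t 0) • Mz z + Ysol ⌊t⌋₊ (t, z) with hZdef
  have hflo : ∀ t : ℝ, t ≤ (⌊t⌋₊ : ℝ) + 1 := fun t => (Nat.lt_floor_add_one t).le
  have hzero : ∀ (j : ℕ) (q : ℝ × Rd d), q.1 ≤ 0 → Ysol j q = 0 := by
    intro j q hq
    rw [hYfix j q, MFAux.pic_of_nonpos (by positivity) hq, intervalIntegral.integral_same]
  have hZk : ∀ (k : ℕ) (t : ℝ) (z : Rd d), 0 ≤ t → t ≤ (k:ℝ)+1 →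
      Z t z = z + Ysol k (t, z) := by
    intro k t z h0 hk
    rw [hZdef]
    simp only [min_eq_right h0, zero_smul, add_zero]
    rw [hYagree ⌊t⌋₊ k (t, z) (hflo t) hk]
  have hZ0 : ∀ z, Z 0 z = z := by
    intro z
    rw [hZk 0 0 z le_rfl (by norm_num), hzero 0 (0, z) le_rfl, add_zero]
  -- continuity of Z
  have h3 : Continuous fun p : ℝ × Rd d => Ysol ⌊p.1⌋₊ p := by
    rw [continuous_iff_continuousAt]
    intro p₀
    have hmem : {p : ℝ × Rd d | p.1 < p₀.1 + 1} ∈ 𝓝 p₀ :=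
      (isOpen_lt continuous_fst continuous_const).mem_nhds (by simp)
    have hev : (fun p : ℝ × Rd d => Ysol (⌊p₀.1⌋₊ + 1) p)
        =ᶠ[𝓝 p₀] (fun p => Ysol ⌊p.1⌋₊ p) := by
      refine Filter.eventuallyEq_of_mem hmem ?_
      intro p hp
      refine hYagree (⌊p₀.1⌋₊ + 1) ⌊p.1⌋₊ p ?_ (hflo p.1)
      have h1 : p.1 < p₀.1 + 1 := hp
      have h2 : p₀.1 < (⌊p₀.1⌋₊ : ℝ) + 1 := Nat.lt_floor_add_one p₀.1
      push_cast
      linarith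
    exact ((hYc (⌊p₀.1⌋₊ + 1)).continuousAt).congr hev
  have hZcont : Continuous fun p : ℝ × Rd d => Z p.1 p.2 := by
    rw [hZdef]
    have h1 : Continuous fun p : ℝ × Rd d => p.2 + (min p.1 0) • Mz p.2 := by fun_prop
    exact h1.add h3
  -- derivative of Z
  have hasD : ∀ (z : Rd d) (t : ℝ), 0 ≤ t →
      HasDerivAt (fun s => Z s z)
        (MFAux.Aop r m ρin ((⌊t⌋₊:ℝ)+1) (Ysol ⌊t⌋₊) t z) t := by
    intro z t ht
    set k := ⌊t⌋₊ with hk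
    set N : ℝ := (k:ℝ)+1 with hN
    have htN : t < N := Nat.lt_floor_add_one t
    have hN0 : (0:ℝ) < N := by positivity
    have hAc : Continuous fun s => MFAux.Aop r m ρin N (Ysol k) s z := by
      have h := MFAux.Aop_cont r m ρin hrc hmc hCr hCm N (hYc k)
      fun_prop
    set F : ℝ → Rd d := fun u => z + ∫ s in (0:ℝ)..u, MFAux.Aop r m ρin N (Ysol k) s z
      with hF
    have hFd : ∀ u, HasDerivAt F (MFAux.Aop r m ρin N (Ysol k) u z) u := by
      intro u
      have h1 : IntervalIntegrable (fun s => MFAux.Aop r m ρin N (Ysol k) s z)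
          volume 0 u := hAc.intervalIntegrable _ _
      have h2 : StronglyMeasurableAtFilter
          (fun s => MFAux.Aop r m ρin N (Ysol k) s z) (𝓝 u) volume :=
        ⟨univ, Filter.univ_mem, hAc.aestronglyMeasurable.restrict⟩
      exact (intervalIntegral.integral_hasDerivAt_right h1 h2 hAc.continuousAt).const_add z
    have hZF : ∀ s, 0 ≤ s → s < N → Z s z = F s := by
      intro s h0 hsN
      rw [hZk k s z h0 hsN.le, hYfix k (s, z), hF]
      simp only
      rw [show MFAux.pic ((k:ℝ)+1) (s, z).1 = s from MFAux.pic_eq h0 hsN.le]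
    rcases eq_or_lt_of_le ht with ht0 | ht0
    · -- t = 0
      have hk0 : k = 0 := by rw [hk, ← ht0]; exact Nat.floor_zero
      have hA0 : MFAux.Aop r m ρin N (Ysol k) 0 z = Mz z := by
        unfold MFAux.Aop
        rw [show MFAux.pic N (0:ℝ) = 0 from MFAux.pic_eq le_rfl hN0.le,
          intervalIntegral.integral_same, zero_add, hzero k (0, z) le_rfl, add_zero]
      have hright : HasDerivWithinAt (fun s => Z s z)
          (MFAux.Aop r m ρin N (Ysol k) 0 z) (Ici 0) 0 := by
        have h1 : ∀ᶠ s in 𝓝[Ici (0:ℝ)] 0, s < N :=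
          nhdsWithin_le_nhds (Iio_mem_nhds hN0)
        have h2 : ∀ᶠ s in 𝓝[Ici (0:ℝ)] 0, 0 ≤ s := eventually_mem_nhdsWithin
        have hev : (fun s => Z s z) =ᶠ[𝓝[Ici (0:ℝ)] 0] F :=
          (h1.and h2).mono fun s hs => hZF s hs.2 hs.1
        have h0 : Z 0 z = F 0 := hZF 0 le_rfl hN0
        exact ((hFd 0).hasDerivWithinAt).congr_of_eventuallyEq hev h0
      have hleft : HasDerivWithinAt (fun s => Z s z)
          (MFAux.Aop r m ρin N (Ysol k) 0 z) (Iic 0) 0 := by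
        rw [hA0]
        have hlin : HasDerivAt (fun s : ℝ => z + s • Mz z) (Mz z) 0 := by
          have := ((hasDerivAt_id (0:ℝ)).smul_const (Mz z)).const_add z
          simpa using this
        have heq : ∀ s ∈ Iic (0:ℝ), Z s z = z + s • Mz z := by
          intro s hs
          rw [hZdef]
          simp only [min_eq_left (mem_Iic.1 hs), hzero ⌊s⌋₊ (s, z) (mem_Iic.1 hs), add_zero]
        exact (hlin.hasDerivWithinAt).congr heq (heq 0 (by simp))
      rw [← ht0]
      have := hleft.union hright
      rw [Iic_union_Ici] at this
      exact hasDerivWithinAt_univ.1 this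
    · -- t > 0
      have hmem : Ioo (0:ℝ) N ∈ 𝓝 t := Ioo_mem_nhds ht0 htN
      have hev : (fun s => Z s z) =ᶠ[𝓝 t] F :=
        Filter.eventuallyEq_of_mem hmem fun s hs => hZF s hs.1.le hs.2
      exact (hFd t).congr_of_eventuallyEq hev
  -- identification of the derivative value
  have hval : ∀ (z : Rd d) (t : ℝ), 0 ≤ t →
      MFAux.Aop r m ρin ((⌊t⌋₊:ℝ)+1) (Ysol ⌊t⌋₊) t z
        = (∫ τ in (0:ℝ)..t, ∫ ζ, r (t, Z t z) (τ, Z τ ζ) ∂ρin)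
          + ∫ ζ, m (t, Z t z) (Z 0 ζ) ∂ρin := by
    intro z t ht
    have htN : t ≤ (⌊t⌋₊:ℝ)+1 := hflo t
    have hZt : Z t z = z + Ysol ⌊t⌋₊ (t, z) := hZk ⌊t⌋₊ t z ht htN
    have hZτ : ∀ τ, 0 ≤ τ → τ ≤ t → ∀ ζ : Rd d, Z τ ζ = ζ + Ysol ⌊t⌋₊ (τ, ζ) :=
      fun τ h0 hτ ζ => hZk ⌊t⌋₊ τ ζ h0 (hτ.trans htN)
    unfold MFAux.Aop
    rw [MFAux.pic_eq ht htN]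
    congr 1
    · refine intervalIntegral.integral_congr ?_
      intro τ hτ
      rw [uIcc_of_le ht] at hτ
      rw [hZt]
      simp only [hZτ τ hτ.1 hτ.2]
    · rw [hZt]
      simp only [hZ0]
  refine ⟨Z, ⟨hZcont, hZ0, fun z t ht => (hval z t ht) ▸ hasD z t ht⟩, ?_⟩
  -- uniqueness
  intro Z' hZ' t ht z
  obtain ⟨hZ'c, hZ'0, hZ'd⟩ := hZ'
  set g : ℝ → Rd d → Rd d := fun s y =>
    (∫ τ in (0:ℝ)..s, ∫ ζ, r (s, Z' s y) (τ, Z' τ ζ) ∂ρin)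
      + ∫ ζ, m (s, Z' s y) (Z' 0 ζ) ∂ρin with hgdef
  have hgcont : ∀ b : ℝ, ∀ y : Rd d, ContinuousOn (fun s => g s y) (Icc 0 b) := by
    intro b y
    have hG : Continuous fun s =>
        (∫ τ in (0:ℝ)..(MFAux.pic b s), ∫ ζ, r (s, Z' s y) (τ, Z' τ ζ) ∂ρin)
          + ∫ ζ, m (s, Z' s y) (Z' 0 ζ) ∂ρin := by
      apply Continuous.add
      · apply intervalIntegral.continuous_parametric_intervalIntegral_of_continuous (μ := volume)
          (f := fun (s τ : ℝ) => ∫ ζ, r (s, Z' s y) (τ, Z' τ ζ) ∂ρin)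
          ?_ (MFAux.continuous_pic b)
        apply MFAux.integral_cont ρin
          (F := fun (q : ℝ × ℝ) ζ => r (q.1, Z' q.1 y) (q.2, Z' q.2 ζ))
          ?_ (fun q ζ => hCr _ _)
        fun_prop
      · apply MFAux.integral_cont ρin
          (F := fun (s : ℝ) ζ => m (s, Z' s y) (Z' 0 ζ)) ?_ (fun s ζ => hCm _ _)
        fun_prop
    refine hG.continuousOn.congr ?_
    intro s hs
    rw [hgdef]
    simp only
    rw [MFAux.pic_eq hs.1 hs.2]
  have hint : ∀ (y : Rd d) (b : ℝ), 0 ≤ b → Z' b y = y + ∫ s in (0:ℝ)..b, g s y := by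
    intro y b hb
    have hd : ∀ s ∈ uIcc (0:ℝ) b, HasDerivAt (fun u => Z' u y) (g s y) s := by
      intro s hs
      rw [uIcc_of_le hb] at hs
      simpa only [hgdef] using hZ'd y s hs.1
    have hi : IntervalIntegrable (fun s => g s y) volume 0 b := by
      apply ContinuousOn.intervalIntegrable
      rw [uIcc_of_le hb]
      exact hgcont b y
    have he := intervalIntegral.integral_eq_sub_of_hasDerivAt hd hi
    rw [hZ'0 y] at he
    exact (sub_eq_iff_eq_add'.1 he.symm)
  set k := ⌊t⌋₊ with hk
  set N : ℝ := (k:ℝ)+1 with hN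
  have htN : t ≤ N := hflo t
  have hN0 : (0:ℝ) < N := by positivity
  set Y' : ℝ × Rd d → Rd d := fun p => Z' (MFAux.pic N p.1) p.2 - p.2 with hY'def
  have hY'c : Continuous Y' := by
    have h1 := MFAux.continuous_pic N
    have h2 := hZ'c
    rw [hY'def]
    fun_prop
  have hY'eq : ∀ p : ℝ × Rd d, Y' p = ∫ s in (0:ℝ)..(MFAux.pic N p.1), g s p.2 := by
    intro p
    rw [hY'def]
    simp only
    rw [hint p.2 (MFAux.pic N p.1) (MFAux.pic_nonneg _ _), add_sub_cancel_left]
  have hgb : ∀ s : ℝ, 0 ≤ s → s ≤ N → ∀ y, ‖g s y‖ ≤ Cr * N + Cm := by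
    intro s hs0 hsN y
    rw [hgdef]
    simp only
    refine (norm_add_le _ _).trans
      (add_le_add ?_ (MFAux.integral_norm_le ρin fun ζ => hCm _ _))
    calc ‖∫ τ in (0:ℝ)..s, ∫ ζ, r (s, Z' s y) (τ, Z' τ ζ) ∂ρin‖
        ≤ Cr * |s - 0| := intervalIntegral.norm_integral_le_of_norm_le_const
          (fun τ _ => MFAux.integral_norm_le ρin fun ζ => hCr _ _)
      _ ≤ Cr * N := by
          rw [sub_zero, abs_of_nonneg hs0]
          exact mul_le_mul_of_nonneg_left hsN hCr0
  have hY'b : ∃ C, ∀ p, ‖Y' p‖ ≤ C := by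
    refine ⟨(Cr * N + Cm) * N, fun p => ?_⟩
    rw [hY'eq p]
    calc ‖∫ s in (0:ℝ)..(MFAux.pic N p.1), g s p.2‖
        ≤ (Cr * N + Cm) * |MFAux.pic N p.1 - 0| := by
          refine intervalIntegral.norm_integral_le_of_norm_le_const ?_
          intro s hs
          rw [uIoc_of_le (MFAux.pic_nonneg N p.1)] at hs
          exact hgb s hs.1.le (hs.2.trans (MFAux.pic_le hN0.le _)) p.2
      _ ≤ (Cr * N + Cm) * N := by
          rw [sub_zero, abs_of_nonneg (MFAux.pic_nonneg N p.1)]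
          have h0 : 0 ≤ Cr * N + Cm := by positivity
          exact mul_le_mul_of_nonneg_left (MFAux.pic_le hN0.le _) h0
  have hcl : ∀ u : ℝ, 0 ≤ u → u ≤ N → ∀ y : Rd d, y + Y' (u, y) = Z' u y := by
    intro u h0 hu y
    rw [hY'def]
    simp only
    rw [MFAux.pic_eq h0 hu]
    abel
  have hY'fix : ∀ p : ℝ × Rd d,
      Y' p = ∫ s in (0:ℝ)..(MFAux.pic N p.1), MFAux.Aop r m ρin N Y' s p.2 := by
    intro p
    rw [hY'eq p]
    refine intervalIntegral.integral_congr ?_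
    intro s hs
    rw [uIcc_of_le (MFAux.pic_nonneg _ _)] at hs
    have hs0 : 0 ≤ s := hs.1
    have hsN : s ≤ N := hs.2.trans (MFAux.pic_le hN0.le _)
    show g s p.2 = MFAux.Aop r m ρin N Y' s p.2
    unfold MFAux.Aop
    rw [MFAux.pic_eq hs0 hsN, hcl s hs0 hsN p.2, hgdef]
    simp only
    congr 1
    · refine intervalIntegral.integral_congr ?_
      intro τ hτ
      rw [uIcc_of_le hs0] at hτ
      simp only [hcl τ hτ.1 (hτ.2.trans hsN)]
    · simp only [hZ'0]
  have huni := hYuniq k Y' hY'c hY'b hY'fix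
  have hfin : Y' (t, z) = Ysol k (t, z) := huni (t, z)
  have h1 : Z' t z = z + Y' (t, z) := by
    rw [hY'def]
    simp only
    rw [MFAux.pic_eq ht htN]
    abel
  rw [h1, hfin, ← hZk k t z ht htN]

end
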